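/- For the function f_{k,n} and any finitely-additive signed measure μ on 2^{Ω_{k,n}}, choosing for each j ≤ n a point i_j ∈ X_j minimizing |μ({i})| over i ∈ X_j, one has n · sup_{A ⊆ Ω_{k,n}} |f_{k,n}(A) - μ(A)| ≥ 3n - μ(Ω_{k,n}) - Σ_{j=1}^n μ({i_ℓ : ℓ ≠ j}). -/
import Mathlib


open Finset

def fkn (n k : ℕ) (A : Finset (Fin n × Fin k)) : ℝ :=
  if A = ∅ then 0
  else if (∀ j : Fin n, ∃ i : Fin k, (j, i) ∈ A) ∧ (∃ j : Fin n, ∀ i : Fin k, (j, i) ∈ A)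
    then 3 else 1

def IsAdditive {Ω : Type*} [DecidableEq Ω] (μ : Finset Ω → ℝ) : Prop :=
  μ ∅ = 0 ∧ ∀ A B : Finset Ω, Disjoint A B → μ (A ∪ B) = μ A + μ B

lemma additive_biUnion {Ω ι : Type*} [DecidableEq Ω] [DecidableEq ι]
    (μ : Finset Ω → ℝ) (hμ : IsAdditive μ) (f : ι → Finset Ω)
    (s : Finset ι)
    (hdis : ∀ a ∈ s, ∀ b ∈ s, a ≠ b → Disjoint (f a) (f b)) :
    μ (s.biUnion f) = ∑ j ∈ s, μ (f j) := by
  induction s using Finset.induction_on with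
  | empty => simpa using hμ.1
  | @insert a t hx ih =>
    rw [Finset.biUnion_insert, Finset.sum_insert hx, hμ.2, ih]
    · intro x hxs y hys hxy
      exact hdis x (mem_insert_of_mem hxs) y (mem_insert_of_mem hys) hxy
    · rw [Finset.disjoint_biUnion_right]
      intro b hb
      exact hdis a (mem_insert_self a t) b (mem_insert_of_mem hb)
        (fun h => hx (h ▸ hb))

theorem stmt_6 (n k : ℕ) (hn : 2 ≤ n) (hk : 2 ≤ k)
    (μ : Finset (Fin n × Fin k) → ℝ) (hμ : IsAdditive μ)
    (i : Fin n → Fin k)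
    (hi : ∀ j : Fin n, ∀ i' : Fin k, |μ {(j, i j)}| ≤ |μ {(j, i')}|)
    (C : ℝ) (hC : ∀ A : Finset (Fin n × Fin k), |fkn n k A - μ A| ≤ C) :
    (n : ℝ) * C ≥
      3 * n - μ univ -
        ∑ j : Fin n, μ ((univ.erase j).image (fun ℓ => (ℓ, i ℓ))) := by
  set R : Fin n → Finset (Fin n × Fin k) := fun j => ({j} : Finset (Fin n)) ×ˢ univ with hR
  set S : Fin n → Finset (Fin n × Fin k) :=
    fun j => (univ.erase j).image (fun ℓ => (ℓ, i ℓ)) with hS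
  have hRdis : ∀ a ∈ (univ : Finset (Fin n)), ∀ b ∈ (univ : Finset (Fin n)),
      a ≠ b → Disjoint (R a) (R b) := by
    intro a _ b _ hab
    simp only [hR, Finset.disjoint_left]
    intro p hp hq
    simp only [Finset.mem_product, Finset.mem_singleton] at hp hq
    exact hab (hp.1.symm.trans hq.1)
  have hU : (univ : Finset (Fin n)).biUnion R = univ := by
    ext p
    simp only [Finset.mem_biUnion, hR, Finset.mem_product, Finset.mem_singleton,
      Finset.mem_univ, and_true, iff_true]
    exact ⟨p.1, trivial, rfl⟩
  have hμU : μ univ = ∑ j : Fin n, μ (R j) := by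
    rw [← hU, additive_biUnion μ hμ R univ hRdis]
  have hdisRS : ∀ j : Fin n, Disjoint (R j) (S j) := by
    intro j
    simp only [hR, hS, Finset.disjoint_left]
    intro p hp hq
    simp only [Finset.mem_product, Finset.mem_singleton] at hp
    simp only [Finset.mem_image, Finset.mem_erase] at hq
    obtain ⟨ℓ, ⟨hℓ, _⟩, hℓ2⟩ := hq
    rw [← hℓ2] at hp
    exact hℓ hp.1
  have hf3 : ∀ j : Fin n, fkn n k (R j ∪ S j) = 3 := by
    intro j
    have hne : R j ∪ S j ≠ ∅ := by
      intro h
      have : (j, (⟨0, by omega⟩ : Fin k)) ∈ R j ∪ S j := by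
        apply Finset.mem_union_left
        simp [hR]
      rw [h] at this
      exact absurd this (Finset.notMem_empty _)
    rw [fkn, if_neg hne, if_pos]
    constructor
    · intro ℓ
      by_cases hℓ : ℓ = j
      · exact ⟨⟨0, by omega⟩, Finset.mem_union_left _ (by simp [hR, hℓ])⟩
      · refine ⟨i ℓ, Finset.mem_union_right _ ?_⟩
        simp only [hS, Finset.mem_image, Finset.mem_erase]
        exact ⟨ℓ, ⟨hℓ, Finset.mem_univ _⟩, rfl⟩
    · exact ⟨j, fun i' => Finset.mem_union_left _ (by simp [hR])⟩
  have key : ∀ j : Fin n, 3 - μ (R j) - μ (S j) ≤ C := by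
    intro j
    have h := hC (R j ∪ S j)
    rw [hf3 j, hμ.2 _ _ (hdisRS j)] at h
    have := abs_le.mp h
    linarith [this.1]
  have hsum : ∑ j : Fin n, (3 - μ (R j) - μ (S j)) ≤ ∑ j : Fin n, C :=
    Finset.sum_le_sum (fun j _ => key j)
  rw [Finset.sum_const, Finset.card_univ, Fintype.card_fin, nsmul_eq_mul] at hsum
  rw [Finset.sum_sub_distrib, Finset.sum_sub_distrib, Finset.sum_const,
    Finset.card_univ, Fintype.card_fin, nsmul_eq_mul] at hsum
  rw [hμU]
  simp only [hS] at hsum ⊢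
  linarith
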